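/- arXiv:2012.03350 — 2 statements merged into one kernel-verified Lean document; each statement's English description precedes it below -/
import Mathlib

section
/- For a Haar-random matrix g ∈ O(d) and any two p-element subsets S, T of {1,…,d}, the expectation of the squared minor det(g[S,T])² (rows S, columns T) of g equals 1/C(d,p). -/
open Finset Matrix Function

variable {R : Type*} [CommRing R] {p d : ℕ}

theorem cauchyBinet (A : Matrix (Fin p) (Fin d) R) (B : Matrix (Fin d) (Fin p) R) :
    (A * B).det = ∑ T : {s : Finset (Fin d) // s.card = p},
      (A.submatrix id (T.1.orderEmbOfFin T.2)).det *
        (B.submatrix (T.1.orderEmbOfFin T.2) id).det := by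
  classical
  have h1 : (A * B).det
      = Matrix.detRowAlternating (fun i => ∑ k : Fin d, A i k • B k) := by
    congr 1
    ext i j
    simp [Matrix.mul_apply]
  rw [h1]
  have h2 : (Matrix.detRowAlternating (fun i => ∑ k : Fin d, A i k • B k) : R)
      = ∑ f : Fin p → Fin d, (∏ i, A i (f i)) • Matrix.detRowAlternating (B ∘ f) := by
    rw [show (Matrix.detRowAlternating (fun i => ∑ k : Fin d, A i k • B k) : R)
        = Matrix.detRowAlternating.toMultilinearMap (fun i => ∑ k : Fin d, A i k • B k) from rfl,
      MultilinearMap.map_sum]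
    refine Finset.sum_congr rfl fun f _ => ?_
    rw [MultilinearMap.map_smul_univ]
    rfl
  rw [h2]
  rw [← Finset.sum_filter_of_ne (p := fun f : Fin p → Fin d => Function.Injective f)
    (fun f _ hne => by
      by_contra hinj
      apply hne
      have : ¬ Function.Injective (B ∘ f) := by
        simp only [Function.Injective] at hinj ⊢
        push_neg at hinj ⊢
        obtain ⟨i, j, hij, hne'⟩ := hinj
        exact ⟨i, j, by simp [Function.comp, hij], hne'⟩
      rw [AlternatingMap.map_eq_zero_of_not_injective _ _ this, smul_zero])]
  -- reindex injective functions by (subset, permutation)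
  rw [← Finset.sum_nbij (s := (Finset.univ : Finset ({s : Finset (Fin d) // s.card = p} × Equiv.Perm (Fin p))))
      (i := fun x => (x.1.1.orderEmbOfFin x.1.2 ∘ x.2 : Fin p → Fin d))
      (f := fun x => (∏ i, A i ((x.1.1.orderEmbOfFin x.1.2) (x.2 i))) •
        (Matrix.detRowAlternating (B ∘ (x.1.1.orderEmbOfFin x.1.2 ∘ x.2)) : R))
      ?_ ?_ ?_ ?_]
  · -- now compute the sum over pairs
    rw [Fintype.sum_prod_type]
    refine Finset.sum_congr rfl fun T _ => ?_
    set e := T.1.orderEmbOfFin T.2 with he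
    have hD : ∀ τ : Equiv.Perm (Fin p),
        (Matrix.detRowAlternating (B ∘ (⇑e ∘ ⇑τ)) : R)
          = Equiv.Perm.sign τ • (B.submatrix (⇑e) id).det := by
      intro τ
      have : B ∘ (⇑e ∘ ⇑τ) = (B ∘ ⇑e) ∘ ⇑τ := rfl
      rw [this, AlternatingMap.map_perm]
      rfl
    simp only [hD]
    have hdetA : (A.submatrix id ⇑e).det
        = ∑ τ : Equiv.Perm (Fin p), Equiv.Perm.sign τ • ∏ i, A i (e (τ i)) := by
      rw [← Matrix.det_transpose, Matrix.det_apply]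
      rfl
    rw [hdetA, Finset.sum_mul]
    refine Finset.sum_congr rfl fun τ _ => ?_
    rw [← he, hD τ, smul_comm]
    simp only [smul_eq_mul]
    rw [smul_mul_assoc]
  · intro a _
    simp only [Finset.mem_filter, Finset.mem_univ, true_and]
    exact (a.1.1.orderEmbOfFin a.1.2).injective.comp a.2.injective
  · intro a _ b _ hab
    have h1 : a.1 = b.1 := by
      have : ((a.1.1 : Finset (Fin d)) : Set (Fin d)) = (b.1.1 : Set (Fin d)) := by
        have h := congrArg Set.range hab
        rw [a.2.surjective.range_comp, b.2.surjective.range_comp] at h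
        rw [← Finset.range_orderEmbOfFin a.1.1 a.1.2, ← Finset.range_orderEmbOfFin b.1.1 b.1.2]
        exact h
      exact Subtype.ext (Finset.coe_injective this)
    refine Prod.ext h1 ?_
    obtain ⟨⟨Ta, hTa⟩, τa⟩ := a
    obtain ⟨⟨Tb, hTb⟩, τb⟩ := b
    simp only at h1 ⊢
    obtain rfl : Ta = Tb := congrArg Subtype.val h1
    refine Equiv.ext fun i => ?_
    exact (Ta.orderEmbOfFin hTa).injective (congrFun hab i)
  · intro f hf
    have hfinj : Function.Injective f := by
      simpa using (Finset.mem_filter.mp hf).2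
    set T' : Finset (Fin d) := Finset.image f Finset.univ with hT'def
    have hT' : T'.card = p := by
      rw [hT'def, Finset.card_image_of_injective _ hfinj, Finset.card_univ, Fintype.card_fin]
    have hmem : ∀ i, f i ∈ T' := fun i => Finset.mem_image_of_mem f (Finset.mem_univ i)
    have hu : Function.Bijective
        (fun i => (T'.orderIsoOfFin hT').symm ⟨f i, hmem i⟩) := by
      rw [← Finite.injective_iff_bijective]
      intro i j hij
      apply hfinj
      have := congrArg (T'.orderIsoOfFin hT') hij
      simpa [Subtype.ext_iff] using this
    refine ⟨⟨⟨T', hT'⟩, Equiv.ofBijective _ hu⟩, Finset.mem_univ _, ?_⟩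
    funext i
    simp only [Function.comp_apply, Equiv.ofBijective_apply]
    rw [← Finset.coe_orderIsoOfFin_apply]
    simp
  · intro x _
    rfl

instance unitaryGroup.topologicalGroup (d : ℕ) :
    IsTopologicalGroup (Matrix.unitaryGroup (Fin d) ℝ) where
  continuous_mul := by
    apply Continuous.subtype_mk
    exact ((continuous_subtype_val.comp continuous_fst).mul
      (continuous_subtype_val.comp continuous_snd))
  continuous_inv := by
    apply Continuous.subtype_mk
    show Continuous fun g : Matrix.unitaryGroup (Fin d) ℝ =>
      star (g : Matrix (Fin d) (Fin d) ℝ)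
    exact continuous_star.comp continuous_subtype_val

theorem unitaryGroup.isCompact (d : ℕ) :
    IsCompact (Matrix.unitaryGroup (Fin d) ℝ : Set (Matrix (Fin d) (Fin d) ℝ)) := by
  have hsub : (Matrix.unitaryGroup (Fin d) ℝ : Set (Matrix (Fin d) (Fin d) ℝ)) ⊆
      Set.pi Set.univ (fun _ : Fin d => Set.pi Set.univ
        (fun _ : Fin d => Set.Icc (-1 : ℝ) 1)) := by
    intro g hg i _ j _
    have h1 : (g * star g) i i = 1 := by
      rw [(Matrix.mem_unitaryGroup_iff).mp hg]
      simp [Matrix.one_apply]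
    have hsum : ∑ k, g i k * g i k = 1 := by
      simpa [Matrix.mul_apply, Matrix.star_apply] using h1
    have hle : g i j * g i j ≤ 1 := by
      rw [← hsum]
      refine Finset.single_le_sum (f := fun k => g i k * g i k) (fun k _ => mul_self_nonneg _)
        (Finset.mem_univ j)
    constructor
    · nlinarith [mul_self_nonneg (g i j + 1)]
    · nlinarith [mul_self_nonneg (g i j - 1)]
  have hcompact : IsCompact (Set.pi Set.univ (fun _ : Fin d => Set.pi Set.univ
      (fun _ : Fin d => Set.Icc (-1 : ℝ) 1))) :=
    isCompact_univ_pi fun _ => isCompact_univ_pi fun _ => isCompact_Icc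
  have hclosed : IsClosed (Matrix.unitaryGroup (Fin d) ℝ : Set (Matrix (Fin d) (Fin d) ℝ)) := by
    have : (Matrix.unitaryGroup (Fin d) ℝ : Set (Matrix (Fin d) (Fin d) ℝ))
        = (fun g : Matrix (Fin d) (Fin d) ℝ => star g * g) ⁻¹' {1} := by
      ext g
      simp [Matrix.mem_unitaryGroup_iff', SetLike.mem_coe]
    rw [this]
    exact IsClosed.preimage ((continuous_star.matrix_mul continuous_id)) isClosed_singleton
  exact hcompact.of_isClosed_subset hclosed hsub

instance unitaryGroup.compactSpace (d : ℕ) :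
    CompactSpace (Matrix.unitaryGroup (Fin d) ℝ) :=
  isCompact_iff_compactSpace.mp (unitaryGroup.isCompact d)

open MeasureTheory

section Measure

variable {G : Type*} [Group G] [TopologicalSpace G] [IsTopologicalGroup G] [CompactSpace G]
  [MeasurableSpace G] [BorelSpace G]

theorem haar_isMulRightInvariant (μ : Measure G) [μ.IsHaarMeasure] :
    μ.IsMulRightInvariant := by
  constructor
  intro h
  have hfun : ⇑((MulAut.conj h⁻¹).toMonoidHom : G →* G) = fun x : G => h⁻¹ * x * h := by
    funext x
    simp [MulAut.conj_apply]
  have hcont : Continuous ((MulAut.conj h⁻¹).toMonoidHom : G →* G) := by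
    rw [hfun]
    exact (continuous_const.mul continuous_id).mul continuous_const
  have hconj : MeasurePreserving ((MulAut.conj h⁻¹).toMonoidHom : G →* G) μ μ :=
    MonoidHom.measurePreserving hcont (MulAut.conj h⁻¹).surjective rfl
  have hconj' : MeasurePreserving (fun x : G => h⁻¹ * x * h) μ μ := hfun ▸ hconj
  have hcomp : ((· * h) : G → G) = (fun x : G => h * x) ∘ (fun x : G => h⁻¹ * x * h) := by
    funext x
    simp [mul_assoc]
  rw [hcomp, ← Measure.map_map (measurable_const_mul h)
    ((measurable_const_mul h⁻¹).mul_const h), hconj'.map_eq, MeasureTheory.map_mul_left_eq_self]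

end Measure

section Perm

variable {d : ℕ}

theorem permMatrix_mem_unitaryGroup (σ : Equiv.Perm (Fin d)) :
    σ.permMatrix ℝ ∈ Matrix.unitaryGroup (Fin d) ℝ := by
  rw [Matrix.mem_unitaryGroup_iff']
  have hstar : star (σ.permMatrix ℝ) = (σ⁻¹).permMatrix ℝ := by
    have h1 : ((σ⁻¹).permMatrix ℝ : Matrix (Fin d) (Fin d) ℝ)
        = ((σ.toPEquiv.symm).toMatrix : Matrix (Fin d) (Fin d) ℝ) := by
      rw [← Equiv.toPEquiv_symm]; rfl
    rw [h1, PEquiv.toMatrix_symm]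
    ext i j
    simp [Matrix.star_apply, PEquiv.toMatrix_apply]
  rw [hstar, PEquiv.toMatrix_toPEquiv_mul]
  ext i j
  simp [PEquiv.toMatrix_apply, Equiv.toPEquiv_apply, Matrix.one_apply, Equiv.eq_symm_apply]

/-- A permutation of `Fin d` carrying the `i`-th element of `T` to the `i`-th element
of `T'`. -/
noncomputable def permOfSets {p : ℕ} (T T' : Finset (Fin d)) (hT : T.card = p)
    (hT' : T'.card = p) : Equiv.Perm (Fin d) :=
  ((Equiv.sumCompl (· ∈ T)).symm.trans
    (Equiv.sumCongr ((T.orderIsoOfFin hT).toEquiv.symm.trans (T'.orderIsoOfFin hT').toEquiv)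
      (Fintype.equivOfCardEq (by
        rw [Fintype.card_subtype_compl, Fintype.card_subtype_compl]
        congr 1
        simp [hT, hT'])))).trans
    (Equiv.sumCompl (· ∈ T'))

theorem permOfSets_apply {p : ℕ} (T T' : Finset (Fin d)) (hT : T.card = p)
    (hT' : T'.card = p) (i : Fin p) :
    permOfSets T T' hT hT' (T.orderEmbOfFin hT i) = T'.orderEmbOfFin hT' i := by
  unfold permOfSets
  simp only [Equiv.trans_apply]
  rw [Equiv.sumCompl_symm_apply_of_pos (Finset.orderEmbOfFin_mem T hT i)]
  have h1 : (⟨T.orderEmbOfFin hT i, Finset.orderEmbOfFin_mem T hT i⟩ : {x // x ∈ T})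
      = T.orderIsoOfFin hT i := by
    ext
    rw [Finset.coe_orderIsoOfFin_apply]
  rw [Equiv.sumCongr_apply]
  simp only [Sum.map_inl, h1]
  simp [RelIso.coe_fn_toEquiv, Equiv.sumCompl_apply_inl, ← Finset.coe_orderIsoOfFin_apply]

end Perm

noncomputable instance (d : ℕ) :
    MeasurableSpace (Matrix.unitaryGroup (Fin d) ℝ) := borel _

instance (d : ℕ) : BorelSpace (Matrix.unitaryGroup (Fin d) ℝ) := ⟨rfl⟩

/-- For a Haar-random `g ∈ O(d)` and any `p`-element subsets `S, T` of the index
set, the expectation of the squared minor `det (g[S,T])²` equals `1 / C(d,p)`. -/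
theorem expected_sq_minor_orthogonal (d p : ℕ) (hpd : p ≤ d)
    (μ : Measure (Matrix.unitaryGroup (Fin d) ℝ))
    [μ.IsHaarMeasure] [IsProbabilityMeasure μ]
    (S T : Finset (Fin d)) (hS : S.card = p) (hT : T.card = p) :
    ∫ g, (Matrix.det ((g : Matrix (Fin d) (Fin d) ℝ).submatrix
        (S.orderEmbOfFin hS) (T.orderEmbOfFin hT))) ^ 2 ∂μ =
      1 / (d.choose p : ℝ) := by
  classical
  haveI : μ.IsMulRightInvariant := haar_isMulRightInvariant μ
  -- notation
  set eS := S.orderEmbOfFin hS with heS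
  -- integrand for a general column set
  set F : Finset (Fin d) → (Matrix.unitaryGroup (Fin d) ℝ) → ℝ := fun T' g =>
    if hT' : T'.card = p then
      (Matrix.det ((g : Matrix (Fin d) (Fin d) ℝ).submatrix eS (T'.orderEmbOfFin hT'))) ^ 2
    else 0 with hF
  have hFapp : ∀ (T' : Finset (Fin d)) (hT' : T'.card = p) (g : Matrix.unitaryGroup (Fin d) ℝ),
      F T' g = (Matrix.det ((g : Matrix (Fin d) (Fin d) ℝ).submatrix eS
        (T'.orderEmbOfFin hT'))) ^ 2 := by
    intro T' hT' g
    rw [hF]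
    simp only [dif_pos hT']
  have hFcont : ∀ T' : Finset (Fin d), Continuous (F T') := by
    intro T'
    by_cases hT' : T'.card = p
    · have : F T' = fun g : Matrix.unitaryGroup (Fin d) ℝ =>
          (Matrix.det ((g : Matrix (Fin d) (Fin d) ℝ).submatrix eS
            (T'.orderEmbOfFin hT'))) ^ 2 := funext fun g => hFapp T' hT' g
      rw [this]
      exact ((continuous_subtype_val.matrix_submatrix _ _).matrix_det).pow 2
    · have : F T' = fun _ => (0 : ℝ) := by
        funext g; rw [hF]; simp only [dif_neg hT']
      rw [this]
      exact continuous_const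
  have hFint : ∀ T' : Finset (Fin d), Integrable (F T') μ := by
    intro T'
    exact (hFcont T').integrable_of_hasCompactSupport
      (isClosed_tsupport _).isCompact
  -- column invariance
  have hcol : ∀ (T' : Finset (Fin d)), T'.card = p → ∫ g, F T' g ∂μ = ∫ g, F T g ∂μ := by
    intro T' hT'
    set σ : Equiv.Perm (Fin d) := permOfSets T T' hT hT' with hσ
    set h : Matrix.unitaryGroup (Fin d) ℝ :=
      ⟨(σ⁻¹).permMatrix ℝ, permMatrix_mem_unitaryGroup _⟩ with hh
    have key := integral_mul_right_eq_self (μ := μ) (F T) h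
    rw [← key]
    refine integral_congr_ae (Filter.Eventually.of_forall fun g => ?_)
    show F T' g = F T (g * h)
    rw [hFapp T' hT' g, hFapp T hT (g * h)]
    congr 2
    have hgh : ((g * h : Matrix.unitaryGroup (Fin d) ℝ) : Matrix (Fin d) (Fin d) ℝ)
        = (g : Matrix (Fin d) (Fin d) ℝ).submatrix id ⇑σ := by
      rw [Matrix.UnitaryGroup.mul_val]
      show (g : Matrix (Fin d) (Fin d) ℝ) * (σ⁻¹).permMatrix ℝ = _
      rw [PEquiv.mul_toMatrix_toPEquiv]
      rfl
    rw [hgh, Matrix.submatrix_submatrix]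
    have hcomp : (⇑σ ∘ ⇑(T.orderEmbOfFin hT)) = ⇑(T'.orderEmbOfFin hT') :=
      funext fun i => permOfSets_apply T T' hT hT' i
    rw [hcomp, Function.id_comp]
  -- Cauchy–Binet: for each g the squared minors over all column sets sum to 1
  have hsum : ∀ g : Matrix.unitaryGroup (Fin d) ℝ,
      ∑ T' : {s : Finset (Fin d) // s.card = p}, F T'.1 g = 1 := by
    intro g
    set A : Matrix (Fin p) (Fin d) ℝ :=
      (g : Matrix (Fin d) (Fin d) ℝ).submatrix eS id with hA
    have hgg : (g : Matrix (Fin d) (Fin d) ℝ) * (g : Matrix (Fin d) (Fin d) ℝ)ᵀ = 1 := by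
      have h2 := g.2.2
      have ht : (g : Matrix (Fin d) (Fin d) ℝ)ᵀ = star (g : Matrix (Fin d) (Fin d) ℝ) := by
        ext i j
        simp [Matrix.star_apply]
      rw [ht]
      exact h2
    have hAAT : A * Aᵀ = 1 := by
      rw [hA, Matrix.transpose_submatrix,
        ← Matrix.submatrix_mul _ _ _ id _ Function.bijective_id, hgg]
      ext i j
      simp [Matrix.one_apply, Matrix.submatrix_apply, (S.orderEmbOfFin hS).injective.eq_iff]
    have hcb := cauchyBinet A Aᵀ
    rw [hAAT, Matrix.det_one] at hcb
    refine Eq.trans (Finset.sum_congr rfl fun T' _ => ?_) hcb.symm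
    rw [hFapp T'.1 T'.2 g]
    have h1 : A.submatrix id ⇑(T'.1.orderEmbOfFin T'.2)
        = (g : Matrix (Fin d) (Fin d) ℝ).submatrix eS (T'.1.orderEmbOfFin T'.2) := by
      rw [hA, Matrix.submatrix_submatrix]
      rfl
    have h2 : Aᵀ.submatrix (⇑(T'.1.orderEmbOfFin T'.2)) id
        = (A.submatrix id (T'.1.orderEmbOfFin T'.2))ᵀ := by
      ext i j
      simp [Matrix.submatrix_apply, Matrix.transpose_apply, hA]
    rw [h1, h2, h1, Matrix.det_transpose]
    ring
  -- combine everything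
  have hcard : (Fintype.card {s : Finset (Fin d) // s.card = p}) = d.choose p := by
    rw [Fintype.card_finset_len, Fintype.card_fin]
  have htotal : ∑ T' : {s : Finset (Fin d) // s.card = p}, ∫ g, F T'.1 g ∂μ = 1 := by
    rw [← integral_finset_sum _ (fun T' _ => hFint T'.1)]
    calc ∫ g, ∑ T' : {s : Finset (Fin d) // s.card = p}, F T'.1 g ∂μ
        = ∫ _g, (1 : ℝ) ∂μ := by
          refine integral_congr_ae (Filter.Eventually.of_forall fun g => ?_)
          exact hsum g
      _ = 1 := by simp
  have hconst : ∑ T' : {s : Finset (Fin d) // s.card = p}, ∫ g, F T'.1 g ∂μ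
      = (d.choose p : ℝ) * ∫ g, F T g ∂μ := by
    rw [Finset.sum_congr rfl (fun T' _ => hcol T'.1 T'.2)]
    rw [Finset.sum_const, Finset.card_univ, hcard, nsmul_eq_mul]
  rw [hconst] at htotal
  have hne : (d.choose p : ℝ) ≠ 0 := by
    exact_mod_cast (Nat.choose_pos hpd).ne'
  have hint : ∫ g, F T g ∂μ = 1 / (d.choose p : ℝ) := by
    field_simp
    linarith [htotal]
  rw [← hint]
  refine integral_congr_ae (Filter.Eventually.of_forall fun g => ?_)
  exact (hFapp T hT g).symm
end

section
/- Let L₀ be a p-dimensional subspace of ℝ^d and L another p-dimensional subspace. If the orthogonal projection π: L → L₀ is a bijection scaling p-dimensional volume by a factor t ∈ (0,1], then the orthogonal projection from the orthogonal complement L^⊥ (a (d−p)-dimensional subspace) onto L₀^⊥ also scales (d−p)-dimensional volume by the same factor t. -/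
open MeasureTheory Matrix Metric
open scoped MeasureTheory RealInnerProductSpace

section Aux

open Module

/-- The orthogonal projection onto a subspace `N`, restricted to a subspace `M` of the same
finite dimension `n`, scales `n`-dimensional Hausdorff measure by the absolute value of the
determinant of its matrix in orthonormal bases. -/
lemma proj_scaling_aux {d n : ℕ} (N : Submodule ℝ (EuclideanSpace ℝ (Fin d)))
    {M : Submodule ℝ (EuclideanSpace ℝ (Fin d))}
    (b : OrthonormalBasis (Fin n) ℝ M) (c : OrthonormalBasis (Fin n) ℝ N)
    (s : Set (EuclideanSpace ℝ (Fin d))) (hs : s ⊆ (M : Set (EuclideanSpace ℝ (Fin d)))) :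
    μH[(n : ℝ)] ((fun x => (Submodule.orthogonalProjectionOnto N x : EuclideanSpace ℝ (Fin d))) '' s) =
      ENNReal.ofReal
          |(Matrix.of fun i j : Fin n =>
            ⟪(c i : EuclideanSpace ℝ (Fin d)), (b j : EuclideanSpace ℝ (Fin d))⟫).det| *
        μH[(n : ℝ)] s := by
  classical
  set A : Matrix (Fin n) (Fin n) ℝ :=
    Matrix.of (fun i j : Fin n =>
      ⟪(c i : EuclideanSpace ℝ (Fin d)), (b j : EuclideanSpace ℝ (Fin d))⟫) with hA
  set T : EuclideanSpace ℝ (Fin n) →ₗ[ℝ] EuclideanSpace ℝ (Fin n) := Matrix.toEuclideanLin A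
    with hT
  set φ : EuclideanSpace ℝ (Fin n) → EuclideanSpace ℝ (Fin d) :=
    fun x => ((b.repr.symm x : M) : EuclideanSpace ℝ (Fin d)) with hφ
  set ψ : EuclideanSpace ℝ (Fin n) → EuclideanSpace ℝ (Fin d) :=
    fun x => ((c.repr.symm x : N) : EuclideanSpace ℝ (Fin d)) with hψ
  have key : ∀ x : EuclideanSpace ℝ (Fin n),
      (Submodule.orthogonalProjectionOnto N (φ x) : EuclideanSpace ℝ (Fin d)) = ψ (T x) := by
    intro x
    have : Submodule.orthogonalProjectionOnto N (φ x) = c.repr.symm (T x) := by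
      apply c.repr.injective
      rw [LinearIsometryEquiv.apply_symm_apply]
      ext i
      rw [c.repr_apply_apply, Submodule.inner_orthogonalProjectionOnto_eq_of_mem_left]
      have hb : φ x = ∑ j, x j • (b j : EuclideanSpace ℝ (Fin d)) := by
        rw [hφ]
        simp only [← b.sum_repr_symm x]
        push_cast
        simp
      rw [hb, inner_sum]
      simp only [real_inner_smul_right]
      rw [hT, Matrix.toEuclideanLin_apply]
      simp [Matrix.mulVec, dotProduct, hA, mul_comm]
    rw [hψ]
    exact congrArg _ this
  have hφiso : Isometry φ := isometry_subtype_coe.comp b.repr.symm.isometry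
  have hψiso : Isometry ψ := isometry_subtype_coe.comp c.repr.symm.isometry
  set u : Set (EuclideanSpace ℝ (Fin n)) := φ ⁻¹' s with hu
  have hsu : φ '' u = s := by
    apply Set.image_preimage_eq_of_subset
    intro y hy
    exact ⟨b.repr ⟨y, hs hy⟩, by simp [hφ]⟩
  have hnn : (0 : ℝ) ≤ (n : ℝ) := Nat.cast_nonneg n
  have himg : (fun x => (Submodule.orthogonalProjectionOnto N x : EuclideanSpace ℝ (Fin d))) '' s =
      ψ '' (T '' u) := by
    rw [← hsu, ← Set.image_comp, ← Set.image_comp]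
    exact Set.image_congr fun x _ => key x
  haveI : (μH[(n : ℝ)] : Measure (EuclideanSpace ℝ (Fin n))).IsAddHaarMeasure := by
    have h := MeasureTheory.isAddHaarMeasure_hausdorffMeasure
      (E := EuclideanSpace ℝ (Fin n))
    rwa [finrank_euclideanSpace_fin] at h
  have hdet : LinearMap.det T = A.det := by
    rw [hT, Matrix.toEuclideanLin_eq_toLin, LinearMap.det_toLin]
  rw [himg, hψiso.hausdorffMeasure_image (Or.inl hnn),
    Measure.addHaar_image_linearMap (μ := (μH[(n : ℝ)] : Measure (EuclideanSpace ℝ (Fin n)))),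
    ← hsu, hφiso.hausdorffMeasure_image (Or.inl hnn), hdet]

/-- Duality of determinants: the determinant of the orthogonal projection `L → L₀` in
orthonormal coordinates agrees in absolute value with that of `Lᗮ → L₀ᗮ`. -/
lemma det_duality_aux {d p n : ℕ} {L L₀ : Submodule ℝ (EuclideanSpace ℝ (Fin d))}
    (b : OrthonormalBasis (Fin p) ℝ L) (b' : OrthonormalBasis (Fin n) ℝ Lᗮ)
    (c : OrthonormalBasis (Fin p) ℝ L₀) (c' : OrthonormalBasis (Fin n) ℝ L₀ᗮ) :
    |(Matrix.of fun i j : Fin p =>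
        ⟪(c i : EuclideanSpace ℝ (Fin d)), (b j : EuclideanSpace ℝ (Fin d))⟫).det| =
    |(Matrix.of fun i j : Fin n =>
        ⟪(c' i : EuclideanSpace ℝ (Fin d)), (b' j : EuclideanSpace ℝ (Fin d))⟫).det| := by
  classical
  set A : Matrix (Fin p) (Fin p) ℝ :=
    Matrix.of (fun i j => ⟪(c i : EuclideanSpace ℝ (Fin d)), (b j : _)⟫) with hA
  set B : Matrix (Fin p) (Fin n) ℝ :=
    Matrix.of (fun i j => ⟪(c i : EuclideanSpace ℝ (Fin d)), (b' j : _)⟫) with hB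
  set C : Matrix (Fin n) (Fin p) ℝ :=
    Matrix.of (fun i j => ⟪(c' i : EuclideanSpace ℝ (Fin d)), (b j : _)⟫) with hC
  set D : Matrix (Fin n) (Fin n) ℝ :=
    Matrix.of (fun i j => ⟪(c' i : EuclideanSpace ℝ (Fin d)), (b' j : _)⟫) with hD
  set Q : Matrix (Fin p ⊕ Fin n) (Fin p ⊕ Fin n) ℝ := Matrix.fromBlocks A B C D with hQ
  -- Parseval-type identity
  have parseval : ∀ x y : EuclideanSpace ℝ (Fin d),
      (∑ j, ⟪x, (b j : EuclideanSpace ℝ (Fin d))⟫ * ⟪y, (b j : EuclideanSpace ℝ (Fin d))⟫)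
        + ∑ j, ⟪x, (b' j : EuclideanSpace ℝ (Fin d))⟫ *
            ⟪y, (b' j : EuclideanSpace ℝ (Fin d))⟫ = ⟪x, y⟫ := by
    intro x y
    have hyd := L.starProjection_add_starProjection_orthogonal y
    simp only [Submodule.starProjection_apply] at hyd
    have hsum : ∀ (K : Submodule ℝ (EuclideanSpace ℝ (Fin d))) [FiniteDimensional ℝ K]
        (e : OrthonormalBasis (Fin p) ℝ K),
        True := fun _ _ _ => trivial
    have h1 : ⟪x, ((Submodule.orthogonalProjectionOnto L y : L) : EuclideanSpace ℝ (Fin d))⟫ =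
        ∑ j, ⟪x, (b j : EuclideanSpace ℝ (Fin d))⟫ *
          ⟪y, (b j : EuclideanSpace ℝ (Fin d))⟫ := by
      rw [b.orthogonalProjectionOnto_apply_eq_sum]
      push_cast
      rw [inner_sum]
      refine Finset.sum_congr rfl fun j _ => ?_
      rw [real_inner_smul_right]
      rw [real_inner_comm y]
      ring
    have h2 : ⟪x, ((Submodule.orthogonalProjectionOnto Lᗮ y : Lᗮ) : EuclideanSpace ℝ (Fin d))⟫ =
        ∑ j, ⟪x, (b' j : EuclideanSpace ℝ (Fin d))⟫ *
          ⟪y, (b' j : EuclideanSpace ℝ (Fin d))⟫ := by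
      rw [b'.orthogonalProjectionOnto_apply_eq_sum]
      push_cast
      rw [inner_sum]
      refine Finset.sum_congr rfl fun j _ => ?_
      rw [real_inner_smul_right]
      rw [real_inner_comm y]
      ring
    rw [← h1, ← h2, ← inner_add_right, hyd]
  -- the combined families
  set v : Fin p ⊕ Fin n → EuclideanSpace ℝ (Fin d) :=
    Sum.elim (fun i => (c i : EuclideanSpace ℝ (Fin d)))
      (fun i => (c' i : EuclideanSpace ℝ (Fin d))) with hv
  have hvorth : ∀ i k, ⟪v i, v k⟫ = if i = k then (1 : ℝ) else 0 := by
    rintro (i | i) (k | k)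
    · have := orthonormal_iff_ite.mp c.orthonormal i k
      simp only [hv, Sum.elim_inl, Submodule.coe_inner] at *
      rw [this]
      simp
    · simp only [hv, Sum.elim_inl, Sum.elim_inr]
      rw [Submodule.inner_right_of_mem_orthogonal (c i).2 (c' k).2]
      simp
    · simp only [hv, Sum.elim_inl, Sum.elim_inr]
      rw [real_inner_comm, Submodule.inner_right_of_mem_orthogonal (c k).2 (c' i).2]
      simp
    · have := orthonormal_iff_ite.mp c'.orthonormal i k
      simp only [hv, Sum.elim_inr, Submodule.coe_inner] at *
      rw [this]
      simp
  have hQQ : Q * Qᵀ = 1 := by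
    ext i k
    have hentry : (Q * Qᵀ) i k = ∑ j, Q i j * Q k j := by
      simp [Matrix.mul_apply, Matrix.transpose_apply]
    rw [hentry]
    have hQv : ∀ i j, Q i j = ⟪v i,
        (Sum.elim (fun i => ((b i : EuclideanSpace ℝ (Fin d))))
          (fun i => ((b' i : EuclideanSpace ℝ (Fin d)))) j)⟫ := by
      rintro (i | i) (j | j) <;> rfl
    have : ∑ j, Q i j * Q k j = ⟪v i, v k⟫ := by
      simp only [hQv]
      rw [Fintype.sum_sum_type]
      exact parseval (v i) (v k)
    rw [this, hvorth i k]
    simp [Matrix.one_apply]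
  -- extract block identities
  have hQQblocks : Matrix.fromBlocks (A * Aᵀ + B * Bᵀ) (A * Cᵀ + B * Dᵀ)
      (C * Aᵀ + D * Bᵀ) (C * Cᵀ + D * Dᵀ) =
      Matrix.fromBlocks (1 : Matrix (Fin p) (Fin p) ℝ) 0 0 (1 : Matrix (Fin n) (Fin n) ℝ) := by
    rw [← Matrix.fromBlocks_multiply, ← Matrix.fromBlocks_transpose, ← hQ, Matrix.fromBlocks_one]
    exact hQQ
  obtain ⟨e11, e12, e21, e22⟩ := Matrix.fromBlocks_inj.mp hQQblocks
  -- the key matrix identity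
  have hkey : Q * Matrix.fromBlocks Aᵀ 0 Bᵀ 1 = Matrix.fromBlocks 1 B 0 D := by
    rw [hQ, Matrix.fromBlocks_multiply]
    rw [e11, e21]
    congr 1 <;> simp
  have hdet : Q.det * A.det = D.det := by
    have h := congrArg Matrix.det hkey
    rwa [Matrix.det_mul, Matrix.det_fromBlocks_zero₁₂, Matrix.det_fromBlocks_zero₂₁,
      Matrix.det_one, Matrix.det_one, mul_one, one_mul, Matrix.det_transpose] at h
  have hQdet : |Q.det| = 1 := by
    have h := congrArg Matrix.det hQQ
    rw [Matrix.det_mul, Matrix.det_transpose, Matrix.det_one] at h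
    rcases mul_self_eq_one_iff.mp h with h' | h' <;> rw [h'] <;> norm_num
  calc |A.det| = |Q.det| * |A.det| := by rw [hQdet, one_mul]
    _ = |Q.det * A.det| := (abs_mul _ _).symm
    _ = |D.det| := by rw [hdet]

end Aux

/-- Duality of principal angles: if the orthogonal projection `L → L₀` between
`p`-dimensional subspaces is a bijection scaling `p`-volume by `t ∈ (0,1]`, then
the orthogonal projection `L^⊥ → L₀^⊥` scales `(d−p)`-volume by the same `t`. -/
theorem orthogonal_complement_projection_scaling (d p : ℕ) (hpd : p ≤ d)
    (t : ℝ) (ht0 : 0 < t) (ht1 : t ≤ 1)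
    (L L₀ : Submodule ℝ (EuclideanSpace ℝ (Fin d)))
    (hL : Module.finrank ℝ L = p) (hL₀ : Module.finrank ℝ L₀ = p)
    (hbij : Set.BijOn
      (fun x => (Submodule.orthogonalProjectionOnto L₀ x : EuclideanSpace ℝ (Fin d)))
      (L : Set (EuclideanSpace ℝ (Fin d))) (L₀ : Set (EuclideanSpace ℝ (Fin d))))
    (hscale : ∀ s : Set (EuclideanSpace ℝ (Fin d)), s ⊆ (L : Set (EuclideanSpace ℝ (Fin d))) →
      μH[p] ((fun x => (Submodule.orthogonalProjectionOnto L₀ x : EuclideanSpace ℝ (Fin d))) '' s) =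
        ENNReal.ofReal t * μH[p] s) :
    ∀ s : Set (EuclideanSpace ℝ (Fin d)), s ⊆ (Lᗮ : Set (EuclideanSpace ℝ (Fin d))) →
      μH[(d : ℝ) - p] ((fun x => (Submodule.orthogonalProjectionOnto L₀ᗮ x : EuclideanSpace ℝ (Fin d))) '' s) =
        ENNReal.ofReal t * μH[(d : ℝ) - p] s := by
  classical
  intro s hsub
  set n := d - p with hn
  have hdim : Module.finrank ℝ (EuclideanSpace ℝ (Fin d)) = d := finrank_euclideanSpace_fin
  have hLperp : Module.finrank ℝ (Lᗮ : Submodule ℝ (EuclideanSpace ℝ (Fin d))) = n := by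
    have h := Submodule.finrank_add_finrank_orthogonal (K := L)
    rw [hdim, hL] at h
    omega
  have hL₀perp : Module.finrank ℝ (L₀ᗮ : Submodule ℝ (EuclideanSpace ℝ (Fin d))) = n := by
    have h := Submodule.finrank_add_finrank_orthogonal (K := L₀)
    rw [hdim, hL₀] at h
    omega
  set b : OrthonormalBasis (Fin p) ℝ L := (stdOrthonormalBasis ℝ L).reindex (finCongr hL) with hb
  set c : OrthonormalBasis (Fin p) ℝ L₀ :=
    (stdOrthonormalBasis ℝ L₀).reindex (finCongr hL₀) with hc
  set b' : OrthonormalBasis (Fin n) ℝ (Lᗮ : Submodule ℝ (EuclideanSpace ℝ (Fin d))) :=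
    (stdOrthonormalBasis ℝ Lᗮ).reindex (finCongr hLperp) with hb'
  set c' : OrthonormalBasis (Fin n) ℝ (L₀ᗮ : Submodule ℝ (EuclideanSpace ℝ (Fin d))) :=
    (stdOrthonormalBasis ℝ L₀ᗮ).reindex (finCongr hL₀perp) with hc'
  set A : Matrix (Fin p) (Fin p) ℝ :=
    Matrix.of (fun i j => ⟪(c i : EuclideanSpace ℝ (Fin d)), (b j : _)⟫) with hA
  -- Step 1: identify t with |A.det|
  have hdetA : ENNReal.ofReal t = ENNReal.ofReal |A.det| := by
    set φ : EuclideanSpace ℝ (Fin p) → EuclideanSpace ℝ (Fin d) :=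
      fun x => ((b.repr.symm x : L) : EuclideanSpace ℝ (Fin d)) with hφ
    set s₀ : Set (EuclideanSpace ℝ (Fin d)) := φ '' Metric.closedBall 0 1 with hs₀def
    have hs₀ : s₀ ⊆ (L : Set (EuclideanSpace ℝ (Fin d))) := by
      rintro x ⟨y, -, rfl⟩
      exact (b.repr.symm y).2
    have e1 := hscale s₀ hs₀
    have e2 := proj_scaling_aux L₀ b c s₀ hs₀
    have hφiso : Isometry φ := isometry_subtype_coe.comp b.repr.symm.isometry
    have hpn : (0 : ℝ) ≤ (p : ℝ) := Nat.cast_nonneg p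
    haveI : (μH[(p : ℝ)] : Measure (EuclideanSpace ℝ (Fin p))).IsAddHaarMeasure := by
      have h := MeasureTheory.isAddHaarMeasure_hausdorffMeasure
        (E := EuclideanSpace ℝ (Fin p))
      rwa [finrank_euclideanSpace_fin] at h
    have hmeas : μH[(p : ℝ)] s₀ =
        μH[(p : ℝ)] (Metric.closedBall (0 : EuclideanSpace ℝ (Fin p)) 1) :=
      hφiso.hausdorffMeasure_image (Or.inl hpn) _
    have hpos : μH[(p : ℝ)] s₀ ≠ 0 := by
      rw [hmeas]
      exact (measure_closedBall_pos _ _ one_pos).ne'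
    have hfin : μH[(p : ℝ)] s₀ ≠ ⊤ := by
      rw [hmeas]
      exact (isCompact_closedBall _ _).measure_lt_top.ne
    rw [e2] at e1
    exact ((ENNReal.mul_left_inj hpos hfin).mp e1).symm
  have hcast : (d : ℝ) - (p : ℝ) = ((n : ℕ) : ℝ) := by
    rw [hn, Nat.cast_sub hpd]
  rw [hcast, proj_scaling_aux L₀ᗮ b' c' s hsub, ← det_duality_aux b b' c c', ← hA, ← hdetA]
end
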